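/- Let d ≥ 1, s ∈ (0,1), p ∈ (1,∞), R₀ ∈ (0,1), k ∈ ℕ, n ∈ ℕ, and let u : ℝ^d → ℝ satisfy |u(y)| ≤ A|y|^n for all y ∈ B_{R₀}(0) and some A > 0. For ε > 0 and x ∈ ℝ^d define W_{2,2}(x,ε) := ∫_{B_{(k+1)ε}(x)^c ∩ B_{(k+1)ε}(0)} J_p(u(x)−u(y)) |x−y|^{−d−sp} dy − ∫_{B_{(k+1)ε}(0)^c ∩ B_{(k+1)ε}(x)} J_p(u(x)−u(y)) |x−y|^{−d−sp} dy. Then there exist C > 0 and ε₁ > 0 such that for all ε ∈ (0,ε₁) and all x ∈ B_{kε}(0), |W_{2,2}(x,ε)| ≤ C ε^{(p−1)n − sp}. -/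

import Mathlib

open MeasureTheory Filter Asymptotics Metric Set NNReal ENNReal

noncomputable section

/-- Euclidean space `ℝ^d`. -/
abbrev Ed (d : ℕ) := EuclideanSpace ℝ (Fin d)

/-- `J_p(t) = |t|^{p-2} t`. -/
def Jp (p t : ℝ) : ℝ := |t| ^ (p - 2) * t

/-- The principal value defining the fractional `p`-Laplacian of `u` at `x` exists and
equals `L`. -/
def fracPLapAt (d : ℕ) (s p : ℝ) (u : Ed d → ℝ) (x : Ed d) (L : ℝ) : Prop :=
  Tendsto (fun δ : ℝ =>
      ∫ y in {y : Ed d | δ < ‖x - y‖}, Jp p (u x - u y) / ‖x - y‖ ^ ((d : ℝ) + s * p))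
    (nhdsWithin 0 (Ioi 0)) (nhds L)

/-- Membership in the tail space `L^{p-1}_{sp}(ℝ^d)`. -/
def memTail (d : ℕ) (s p : ℝ) (u : Ed d → ℝ) : Prop :=
  Measurable u ∧
    Integrable (fun x : Ed d => |u x| ^ (p - 1) / (1 + ‖x‖) ^ ((d : ℝ) + s * p))

/-- The moments `m_{i,k} = ∫ x_i^{2k} |x|^{-4k} |u(x)|^{p-1} |x|^{-d-sp} dx ∈ [0,∞]`. -/
def mik (d : ℕ) (s p : ℝ) (u : Ed d → ℝ) (i : Fin d) (k : ℕ) : ℝ≥0∞ :=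
  ∫⁻ x : Ed d, ENNReal.ofReal
    ((x i ^ (2 * k) / ‖x‖ ^ (4 * k)) * (|u x| ^ (p - 1) / ‖x‖ ^ ((d : ℝ) + s * p)))

/-- The Carleman-type condition: for every `i` the series `∑_{k≥1} m_{i,k}^{-1/(2k)}`
diverges to `+∞` (with conventions `1/0 = ∞`, `1/∞ = 0`). -/
def carleman (d : ℕ) (s p : ℝ) (u : Ed d → ℝ) : Prop :=
  ∀ i : Fin d, ∑' k : ℕ, (mik d s p u i (k + 1) ^ ((1 : ℝ) / (2 * ((k : ℝ) + 1))))⁻¹ = ⊤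

/-- bound on `W_{2,2}`. If `|u(y)| ≤ A |y|^n` on `B_{R₀}(0)`, then
`W_{2,2}(x,ε) = ∫_{B_{(k+1)ε}(x)^c ∩ B_{(k+1)ε}(0)} J_p(u(x)-u(y)) |x-y|^{-d-sp} dy
  - ∫_{B_{(k+1)ε}(0)^c ∩ B_{(k+1)ε}(x)} J_p(u(x)-u(y)) |x-y|^{-d-sp} dy`
satisfies `|W_{2,2}(x,ε)| ≤ C ε^{(p-1)n - sp}` for all small `ε` and `x ∈ B_{kε}(0)`. -/
lemma abs_Jp_le {p : ℝ} (hp : 1 < p) {t M : ℝ} (h : |t| ≤ M) : |Jp p t| ≤ M ^ (p - 1) := by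
  rcases eq_or_ne t 0 with rfl | ht
  · simp only [Jp, abs_zero, mul_zero, abs_zero]
    exact Real.rpow_nonneg (le_trans (abs_nonneg 0) (by simpa using h)) _
  · have h0 : (0:ℝ) < |t| := abs_pos.2 ht
    have e : |Jp p t| = |t| ^ (p - 1) := by
      rw [Jp, abs_mul, abs_of_nonneg (Real.rpow_nonneg (abs_nonneg t) _)]
      calc |t| ^ (p-2) * |t| = |t| ^ (p-2) * |t| ^ (1:ℝ) := by rw [Real.rpow_one]
        _ = |t| ^ (p - 2 + 1) := (Real.rpow_add h0 _ _).symm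
        _ = |t| ^ (p - 1) := by ring_nf
    rw [e]
    exact Real.rpow_le_rpow (abs_nonneg t) h (by linarith)

lemma integral_bound (d : ℕ) (hd : 1 ≤ d) (s p : ℝ) (hq : 0 ≤ (d:ℝ) + s*p) (hp : 1 < p)
    (u : Ed d → ℝ) (x : Ed d) (S : Set (Ed d)) (hSm : MeasurableSet S)
    (r M δ : ℝ) (hr : 0 < r) (hδ : 0 < δ) (hM : 0 ≤ M)
    (hvol : volume S ≤ volume (ball (0:Ed d) r))
    (hpt : ∀ y ∈ S, |u x - u y| ≤ M ∧ δ ≤ ‖x - y‖) :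
    |∫ y in S, Jp p (u x - u y) / ‖x - y‖ ^ ((d:ℝ) + s * p)|
      ≤ M ^ (p-1) / δ ^ ((d:ℝ) + s*p) * (r ^ d * (volume (ball (0:Ed d) 1)).toReal) := by
  haveI : Nonempty (Fin d) := Fin.pos_iff_nonempty.mp hd
  have hSfin : volume S < ⊤ := lt_of_le_of_lt hvol measure_ball_lt_top
  have key : ∀ y ∈ S, ‖Jp p (u x - u y) / ‖x - y‖ ^ ((d:ℝ) + s*p)‖
      ≤ M^(p-1)/δ^((d:ℝ)+s*p) := by
    intro y hy
    obtain ⟨h1, h2⟩ := hpt y hy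
    rw [Real.norm_eq_abs, abs_div, abs_of_nonneg (Real.rpow_nonneg (norm_nonneg _) _)]
    exact div_le_div₀ (Real.rpow_nonneg hM _) (abs_Jp_le hp h1) (Real.rpow_pos_of_pos hδ _)
      (Real.rpow_le_rpow hδ.le h2 hq)
  have hball : (volume (ball (0:Ed d) r)).toReal
      = r ^ d * (volume (ball (0:Ed d) 1)).toReal := by
    rw [Measure.addHaar_ball _ _ hr.le, ENNReal.toReal_mul,
      ENNReal.toReal_ofReal (pow_nonneg hr.le _), finrank_euclideanSpace, Fintype.card_fin]
  calc |∫ y in S, Jp p (u x - u y) / ‖x - y‖ ^ ((d:ℝ) + s * p)|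
      = ‖∫ y in S, Jp p (u x - u y) / ‖x - y‖ ^ ((d:ℝ) + s * p)‖ :=
        (Real.norm_eq_abs _).symm
    _ ≤ M^(p-1)/δ^((d:ℝ)+s*p) * (volume S).toReal :=
        MeasureTheory.norm_setIntegral_le_of_norm_le_const hSfin key
    _ ≤ M^(p-1)/δ^((d:ℝ)+s*p) * (r ^ d * (volume (ball (0:Ed d) 1)).toReal) := by
        rw [← hball]
        exact mul_le_mul_of_nonneg_left
          (ENNReal.toReal_mono measure_ball_lt_top.ne hvol)
          (div_nonneg (Real.rpow_nonneg hM _) (Real.rpow_nonneg hδ.le _))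

lemma combine {p q ε c₁ c₂ c₃ v : ℝ} (hp : 0 ≤ p - 1) (hε : 0 < ε)
    (hc₁ : 0 ≤ c₁) (hc₂ : 0 < c₂) (hc₃ : 0 ≤ c₃) (n d : ℕ) :
    (c₁ * ε ^ n) ^ (p-1) / (c₂ * ε) ^ q * ((c₃ * ε) ^ d * v)
      = (c₁ ^ (p-1) / c₂ ^ q * (c₃ ^ d * v)) * ε ^ ((p-1) * n + d - q) := by
  have h1 : (c₂:ℝ)^q ≠ 0 := (Real.rpow_pos_of_pos hc₂ q).ne'
  have h2 : ε ^ q ≠ 0 := (Real.rpow_pos_of_pos hε q).ne'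
  rw [Real.mul_rpow hc₁ (pow_nonneg hε.le n), Real.mul_rpow hc₂.le hε.le, mul_pow,
      ← Real.rpow_natCast ε n, ← Real.rpow_mul hε.le, ← Real.rpow_natCast ε d,
      show (p-1)*(n:ℝ) + (d:ℝ) - q = ((n:ℝ)*(p-1) + (d:ℝ)) - q by ring,
      Real.rpow_sub hε, Real.rpow_add hε]
  field_simp

set_option maxHeartbeats 1000000 in
theorem W22_bound
    (d : ℕ) (hd : 1 ≤ d) (s p : ℝ) (hs : s ∈ Ioo (0 : ℝ) 1) (hp : 1 < p)
    (R₀ : ℝ) (hR₀ : R₀ ∈ Ioo (0 : ℝ) 1) (k : ℕ) (n : ℕ)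
    (u : Ed d → ℝ) (A : ℝ) (hA : 0 < A)
    (hbound : ∀ y ∈ ball (0 : Ed d) R₀, |u y| ≤ A * ‖y‖ ^ n) :
    ∃ C > (0 : ℝ), ∃ ε₁ > (0 : ℝ), ∀ ε ∈ Ioo (0 : ℝ) ε₁,
      ∀ x ∈ ball (0 : Ed d) (k * ε),
        |(∫ y in (ball x ((k + 1) * ε))ᶜ ∩ ball (0 : Ed d) ((k + 1) * ε),
            Jp p (u x - u y) / ‖x - y‖ ^ ((d : ℝ) + s * p))
          - (∫ y in (ball (0 : Ed d) ((k + 1) * ε))ᶜ ∩ ball x ((k + 1) * ε),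
              Jp p (u x - u y) / ‖x - y‖ ^ ((d : ℝ) + s * p))|
          ≤ C * ε ^ ((p - 1) * n - s * p) := by
  haveI : Nonempty (Fin d) := Fin.pos_iff_nonempty.mp hd
  obtain ⟨hs0, hs1⟩ := hs
  obtain ⟨hR0, hR1⟩ := hR₀
  have hq : 0 ≤ (d:ℝ) + s*p := by positivity
  have hp1 : 0 ≤ p - 1 := by linarith
  set v : ℝ := (volume (ball (0:Ed d) 1)).toReal with hv
  have hvpos : 0 < v := ENNReal.toReal_pos (measure_ball_pos volume (0:Ed d) one_pos).ne'
    measure_ball_lt_top.ne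
  set q : ℝ := (d:ℝ) + s*p with hqdef
  set K₁ : ℝ := (2*A*((k:ℝ)+1)^n)^(p-1) / ((k:ℝ)+1)^q * (((k:ℝ)+1)^d * v) with hK₁
  set K₂ : ℝ := (2*A*(2*(k:ℝ)+2)^n)^(p-1) / (1:ℝ)^q * (((k:ℝ)+1)^d * v) with hK₂
  have hk1 : (0:ℝ) < (k:ℝ) + 1 := by positivity
  have hK₁pos : 0 < K₁ := by positivity
  have hK₂pos : 0 < K₂ := by positivity
  refine ⟨K₁ + K₂, by positivity, R₀ / (2*(k:ℝ)+2), by positivity, ?_⟩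
  rintro ε ⟨hε, hεlt⟩ x hx
  rw [mem_ball_zero_iff] at hx
  have h2k : (2*(k:ℝ)+2)*ε < R₀ := by
    rw [lt_div_iff₀ (by positivity)] at hεlt
    linarith
  set r : ℝ := ((k:ℝ)+1)*ε with hrdef
  have hr : 0 < r := by positivity
  have hkr : (k:ℝ)*ε ≤ r := by
    have : (k:ℝ) ≤ (k:ℝ)+1 := by linarith
    nlinarith
  have hrR : r < R₀ := by
    have : r ≤ (2*(k:ℝ)+2)*ε := by nlinarith [(Nat.cast_nonneg k : (0:ℝ) ≤ (k:ℝ))]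
    linarith
  have hxR : x ∈ ball (0:Ed d) R₀ := by
    rw [mem_ball_zero_iff]
    calc ‖x‖ < (k:ℝ)*ε := hx
      _ ≤ r := hkr
      _ < R₀ := hrR
  have hux : |u x| ≤ A * r ^ n := by
    refine le_trans (hbound x hxR) (mul_le_mul_of_nonneg_left ?_ hA.le)
    exact pow_le_pow_left₀ (norm_nonneg x) (le_of_lt (lt_of_lt_of_le hx hkr)) n
  -- first integral
  have hb1 : |∫ y in (ball x ((k + 1) * ε))ᶜ ∩ ball (0 : Ed d) ((k + 1) * ε),
        Jp p (u x - u y) / ‖x - y‖ ^ ((d : ℝ) + s * p)|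
      ≤ (2*A*r^n) ^ (p-1) / r ^ q * (r ^ d * v) := by
    refine integral_bound d hd s p hq hp u x _
      (measurableSet_ball.compl.inter measurableSet_ball) r (2*A*r^n) r hr hr
      (by positivity) (measure_mono inter_subset_right) ?_
    rintro y ⟨hy1, hy2⟩
    rw [mem_ball_zero_iff] at hy2
    have hyR : y ∈ ball (0:Ed d) R₀ := mem_ball_zero_iff.mpr (lt_trans hy2 hrR)
    have huy : |u y| ≤ A * r ^ n :=
      le_trans (hbound y hyR) (mul_le_mul_of_nonneg_left
        (pow_le_pow_left₀ (norm_nonneg y) hy2.le n) hA.le)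
    constructor
    · calc |u x - u y| ≤ |u x| + |u y| := abs_sub _ _
        _ ≤ 2*A*r^n := by linarith
    · have := hy1
      simp only [mem_compl_iff, mem_ball, not_lt, dist_eq_norm, ← norm_sub_rev x y] at this
      exact this
  -- second integral
  have hvol2 : volume ((ball (0:Ed d) ((k+1)*ε))ᶜ ∩ ball x ((k+1)*ε))
      ≤ volume (ball (0:Ed d) r) := by
    refine le_trans (measure_mono inter_subset_right) (le_of_eq ?_)
    rw [Measure.addHaar_ball _ _ hr.le, Measure.addHaar_ball _ _ hr.le]
  have hb2 : |∫ y in (ball (0 : Ed d) ((k + 1) * ε))ᶜ ∩ ball x ((k + 1) * ε),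
        Jp p (u x - u y) / ‖x - y‖ ^ ((d : ℝ) + s * p)|
      ≤ (2*A*((2*(k:ℝ)+2)*ε)^n) ^ (p-1) / (1*ε) ^ q * (r ^ d * v) := by
    refine integral_bound d hd s p hq hp u x _
      (measurableSet_ball.compl.inter measurableSet_ball) r _ (1*ε) hr (by positivity)
      (by positivity) hvol2 ?_
    rintro y ⟨hy1, hy2⟩
    simp only [mem_compl_iff, mem_ball_zero_iff, not_lt] at hy1
    rw [mem_ball, dist_eq_norm] at hy2
    have hyle : ‖y‖ ≤ (2*(k:ℝ)+2)*ε := by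
      have h3 : ‖y‖ ≤ ‖y - x‖ + ‖x‖ := by
        have := norm_le_norm_add_norm_sub' y x; linarith
      have : ‖y - x‖ < r := hy2
      nlinarith
    have hyR : y ∈ ball (0:Ed d) R₀ := mem_ball_zero_iff.mpr (lt_of_le_of_lt hyle h2k)
    have huy : |u y| ≤ A * ((2*(k:ℝ)+2)*ε) ^ n :=
      le_trans (hbound y hyR) (mul_le_mul_of_nonneg_left
        (pow_le_pow_left₀ (norm_nonneg y) hyle n) hA.le)
    have hux2 : |u x| ≤ A * ((2*(k:ℝ)+2)*ε) ^ n := by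
      refine le_trans hux (mul_le_mul_of_nonneg_left
        (pow_le_pow_left₀ hr.le ?_ n) hA.le)
      nlinarith [(Nat.cast_nonneg k : (0:ℝ) ≤ (k:ℝ))]
    constructor
    · calc |u x - u y| ≤ |u x| + |u y| := abs_sub _ _
        _ ≤ 2*A*((2*(k:ℝ)+2)*ε)^n := by linarith
    · have h4 : ‖y‖ - ‖x‖ ≤ ‖y - x‖ := norm_sub_norm_le y x
      rw [← norm_sub_rev]
      have : r ≤ ‖y‖ := hy1
      nlinarith
  have hexp : (p-1)*(n:ℝ) + (d:ℝ) - q = (p - 1) * n - s * p := by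
    rw [hqdef]; ring
  have e1 : (2*A*r^n) ^ (p-1) / r ^ q * (r ^ d * v) = K₁ * ε ^ ((p - 1) * n - s * p) := by
    rw [hrdef, show 2*A*(((k:ℝ)+1)*ε)^n = (2*A*((k:ℝ)+1)^n)*ε^n by rw [mul_pow]; ring,
      combine hp1 hε (by positivity) hk1 hk1.le n d, hexp, hK₁]
  have e2 : (2*A*((2*(k:ℝ)+2)*ε)^n) ^ (p-1) / (1*ε) ^ q * (r ^ d * v)
      = K₂ * ε ^ ((p - 1) * n - s * p) := by
    rw [hrdef, show 2*A*((2*(k:ℝ)+2)*ε)^n = (2*A*(2*(k:ℝ)+2)^n)*ε^n by rw [mul_pow]; ring,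
      combine hp1 hε (by positivity) one_pos hk1.le n d, hexp, hK₂]
  rw [e1] at hb1
  rw [e2] at hb2
  calc |_ - _| ≤ _ := abs_sub _ _
    _ ≤ K₁ * ε ^ ((p - 1) * n - s * p) + K₂ * ε ^ ((p - 1) * n - s * p) :=
        add_le_add hb1 hb2
    _ = (K₁ + K₂) * ε ^ ((p - 1) * n - s * p) := by ring
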